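/- Let n ≥ 1 and let σ be a Z-retraction of [0,1]ⁿ such that there exists a Z-homeomorphism of R_σ onto [0,1]ⁿ. Then σ is the identity map of [0,1]ⁿ; consequently the identity is the unique retraction of McN([0,1]ⁿ) onto itself, i.e., the index of the free MV-algebra McN([0,1]ⁿ) equals 1. -/

import Mathlib

open Set MeasureTheory

/-- The unit cube `[0,1]^n` in `ℝ^n`. -/
def cubeSet (n : ℕ) : Set (Fin n → ℝ) := Set.Icc 0 1

/-- A point all of whose coordinates are rational. -/
def IsRationalPoint {n : ℕ} (v : Fin n → ℝ) : Prop := ∀ i, ∃ q : ℚ, v i = (q : ℝ)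

/-- A rational polyhedron: a finite union of convex hulls of finite sets of rational points. -/
def IsRationalPolyhedron {n : ℕ} (P : Set (Fin n → ℝ)) : Prop :=
  ∃ S : Finset (Finset (Fin n → ℝ)),
    (∀ F ∈ S, ∀ v ∈ F, IsRationalPoint v) ∧
    P = ⋃ F ∈ S, convexHull ℝ (F : Set (Fin n → ℝ))

/-- An affine map `x ↦ Mx + b` with integer matrix `M` and integer vector `b`. -/
def IsIntAffine {n m : ℕ} (g : (Fin n → ℝ) → (Fin m → ℝ)) : Prop :=
  ∃ (M : Fin m → Fin n → ℤ) (b : Fin m → ℤ),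
    ∀ x i, g x i = (∑ j, (M i j : ℝ) * x j) + (b i : ℝ)

/-- A Z-map on `P`: continuous on `P`, with finitely many integer affine pieces. -/
def IsZMapOn {n m : ℕ} (P : Set (Fin n → ℝ)) (f : (Fin n → ℝ) → (Fin m → ℝ)) : Prop :=
  ContinuousOn f P ∧
  ∃ (k : ℕ) (g : Fin k → (Fin n → ℝ) → (Fin m → ℝ)),
    (∀ i, IsIntAffine (g i)) ∧ ∀ x ∈ P, ∃ i, f x = g i x

/-- `f` restricted to `P` is a Z-homeomorphism of `P` onto `Q`. -/
def IsZHomeoOnto {n m : ℕ} (P : Set (Fin n → ℝ)) (Q : Set (Fin m → ℝ))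
    (f : (Fin n → ℝ) → (Fin m → ℝ)) : Prop :=
  IsZMapOn P f ∧ f '' P = Q ∧ Set.InjOn f P ∧
  ∃ g : (Fin m → ℝ) → (Fin n → ℝ),
    IsZMapOn Q g ∧ (∀ x ∈ P, g (f x) = x) ∧ (∀ y ∈ Q, f (g y) = y)

/-- A Z-retraction of the cube `[0,1]^n`. -/
def IsZRetraction {n : ℕ} (σ : (Fin n → ℝ) → (Fin n → ℝ)) : Prop :=
  IsZMapOn (cubeSet n) σ ∧ Set.MapsTo σ (cubeSet n) (cubeSet n) ∧
  ∀ x ∈ cubeSet n, σ (σ x) = σ x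

/-- The range `R_σ = σ([0,1]^n)` of a Z-retraction. -/
def zRange {n : ℕ} (σ : (Fin n → ℝ) → (Fin n → ℝ)) : Set (Fin n → ℝ) := σ '' cubeSet n

/-- A Z-homeomorphism domain for `σ`: a rational polyhedron `Q ⊆ [0,1]^n` such that
`σ` restricted to `Q` is a Z-homeomorphism of `Q` onto `R_σ`. -/
def IsZHomeoDomain {n : ℕ} (σ : (Fin n → ℝ) → (Fin n → ℝ)) (Q : Set (Fin n → ℝ)) : Prop :=
  IsRationalPolyhedron Q ∧ Q ⊆ cubeSet n ∧ IsZHomeoOnto Q (zRange σ) σ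

/-- A (Kuratowski) closed domain: `D` equals the closure of its interior. -/
def IsClosedDomain {n : ℕ} (D : Set (Fin n → ℝ)) : Prop :=
  closure (interior D) = D

/-- A scalar integer affine map. -/
def IsIntAffine1 {n : ℕ} (g : (Fin n → ℝ) → ℝ) : Prop :=
  ∃ (m : Fin n → ℤ) (b : ℤ), ∀ x, g x = (∑ j, (m j : ℝ) * x j) + (b : ℝ)

/-- A scalar Z-map on `P`. -/
def IsZMapOn1 {n : ℕ} (P : Set (Fin n → ℝ)) (f : (Fin n → ℝ) → ℝ) : Prop :=
  ContinuousOn f P ∧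
  ∃ (k : ℕ) (g : Fin k → (Fin n → ℝ) → ℝ),
    (∀ i, IsIntAffine1 (g i)) ∧ ∀ x ∈ P, ∃ i, f x = g i x

/-- The free MV-algebra `McN([0,1]^n)`, viewed as a set of functions on the cube. -/
def McN (n : ℕ) : Set (↥(cubeSet n) → ℝ) :=
  { f | (∀ x, f x ∈ Set.Icc (0:ℝ) 1) ∧
    ∃ g : (Fin n → ℝ) → ℝ, IsZMapOn1 (cubeSet n) g ∧ ∀ x : ↥(cubeSet n), f x = g x.1 }

/-- Pointwise MV-sum `f ⊕ g = min(f + g, 1)`. -/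
def mvAdd {X : Type*} (f g : X → ℝ) : X → ℝ := fun x => min (f x + g x) 1

/-- Pointwise MV-negation `¬f = 1 - f`. -/
def mvNeg {X : Type*} (f : X → ℝ) : X → ℝ := fun x => 1 - f x

/-- The retract `A_σ = {g ∘ σ : g ∈ McN([0,1]^n)}` associated with a Z-retraction `σ`. -/
def retAlg {n : ℕ} (σ : (Fin n → ℝ) → (Fin n → ℝ)) : Set (↥(cubeSet n) → ℝ) :=
  { f | ∃ g ∈ McN n, ∀ (x : ↥(cubeSet n)) (h : σ x.1 ∈ cubeSet n), f x = g ⟨σ x.1, h⟩ }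

/-- `ε` is a retraction of `McN([0,1]^n)` onto `A`. -/
def IsMcNRetraction {n : ℕ} (ε : ↥(McN n) → ↥(McN n)) (A : Set (↥(cubeSet n) → ℝ)) : Prop :=
  (∀ (f g : ↥(McN n)) (h : mvAdd f.1 g.1 ∈ McN n),
      (ε ⟨mvAdd f.1 g.1, h⟩).1 = mvAdd (ε f).1 (ε g).1) ∧
  (∀ (f : ↥(McN n)) (h : mvNeg f.1 ∈ McN n),
      (ε ⟨mvNeg f.1, h⟩).1 = mvNeg (ε f).1) ∧
  (∀ f, ε (ε f) = ε f) ∧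
  Subtype.val '' Set.range ε = A

/-- An MV-isomorphism between two sets of `[0,1]`-valued functions. -/
def IsMVIsoFun {X Y : Type*} (A : Set (X → ℝ)) (B : Set (Y → ℝ)) (h : ↥A → ↥B) : Prop :=
  Function.Bijective h ∧
  (∀ (f g : ↥A) (hm : mvAdd f.1 g.1 ∈ A),
      (h ⟨mvAdd f.1 g.1, hm⟩).1 = mvAdd (h f).1 (h g).1) ∧
  (∀ (f : ↥A) (hm : mvNeg f.1 ∈ A),
      (h ⟨mvNeg f.1, hm⟩).1 = mvNeg (h f).1)


lemma aux_null {n : ℕ} (L : Matrix (Fin n) (Fin n) ℝ) (hL : L ≠ 0) (w : Fin n → ℝ) :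
    volume {x : Fin n → ℝ | L.mulVec x = w} = 0 := by
  rcases Set.eq_empty_or_nonempty {x : Fin n → ℝ | L.mulVec x = w} with he | ⟨x₀, hx₀⟩
  · simp [he]
  have hw : L.mulVec x₀ = w := hx₀
  have hK : LinearMap.ker (Matrix.mulVecLin L) ≠ ⊤ := by
    intro h
    apply hL
    have h0 : Matrix.mulVecLin L = 0 := LinearMap.ker_eq_top.1 h
    ext i j
    have h1 : L.mulVec (Pi.single j 1) = 0 := by
      have := congrArg (fun f => f (Pi.single j (1:ℝ))) h0
      simpa [Matrix.mulVecLin] using this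
    have := congrFun h1 i
    simpa [Matrix.mulVec_single] using this
  have hsub : {x : Fin n → ℝ | L.mulVec x = w} ⊆
      (fun y => y + (-x₀)) ⁻¹' (LinearMap.ker (Matrix.mulVecLin L) : Set (Fin n → ℝ)) := by
    intro x hx
    have hx' : L.mulVec x = w := hx
    simp only [Set.mem_preimage, SetLike.mem_coe, LinearMap.mem_ker]
    show Matrix.mulVecLin L (x + (-x₀)) = 0
    rw [Matrix.mulVecLin_apply, Matrix.mulVec_add, Matrix.mulVec_neg, hx', hw]
    simp
  refine le_antisymm ?_ zero_le
  calc volume {x : Fin n → ℝ | L.mulVec x = w}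
      ≤ volume ((fun y => y + (-x₀)) ⁻¹' (LinearMap.ker (Matrix.mulVecLin L) : Set (Fin n → ℝ))) :=
        measure_mono hsub
    _ = volume (LinearMap.ker (Matrix.mulVecLin L) : Set (Fin n → ℝ)) :=
        measure_preimage_add_right _ _ _
    _ = 0 := Measure.addHaar_submodule _ _ hK

lemma det_map_cast {n : ℕ} (A : Matrix (Fin n) (Fin n) ℤ) :
    (A.map (Int.cast : ℤ → ℝ)).det = ((A.det : ℤ) : ℝ) := by
  rw [show (A.map (Int.cast : ℤ → ℝ)) = (Int.castRingHom ℝ).mapMatrix A from rfl,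
    ← RingHom.map_det]
  rfl

lemma piece_bound {n : ℕ} (Mz Nz : Matrix (Fin n) (Fin n) ℤ) (b c : Fin n → ℝ)
    (S : Set (Fin n → ℝ))
    (hid : ∀ x ∈ S,
      (Nz.map (Int.cast : ℤ → ℝ)).mulVec ((Mz.map (Int.cast : ℤ → ℝ)).mulVec x + b) + c = x) :
    volume ((fun x => (Mz.map (Int.cast : ℤ → ℝ)).mulVec x + b) '' S) ≤ volume S := by
  set M := Mz.map (Int.cast : ℤ → ℝ) with hM
  set N := Nz.map (Int.cast : ℤ → ℝ) with hN
  have himg : (fun x => M.mulVec x + b) '' S = (fun y => y + (-b)) ⁻¹' (Matrix.toLin' M '' S) := by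
    ext y
    constructor
    · rintro ⟨x, hx, rfl⟩
      exact ⟨x, hx, by simp [Matrix.toLin'_apply]⟩
    · rintro ⟨x, hx, hxy⟩
      simp only [Matrix.toLin'_apply] at hxy
      refine ⟨x, hx, ?_⟩
      show M.mulVec x + b = y
      rw [hxy]; abel
  have hvol : volume ((fun x => M.mulVec x + b) '' S)
      = ENNReal.ofReal |LinearMap.det (Matrix.toLin' M)| * volume S := by
    rw [himg, measure_preimage_add_right, Measure.addHaar_image_linearMap]
  rw [hvol]
  rcases eq_or_ne (volume S) 0 with h0 | h0
  · simp [h0]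
  have hNM : N * M = 1 := by
    by_contra hne
    have hLne : N * M - 1 ≠ 0 := sub_ne_zero.2 hne
    have hsub : S ⊆ {x : Fin n → ℝ | (N * M - 1).mulVec x = -(N.mulVec b + c)} := by
      intro x hx
      have key : (N * M).mulVec x + (N.mulVec b + c) = x := by
        have h1 := hid x hx
        rw [Matrix.mulVec_add, Matrix.mulVec_mulVec] at h1
        rw [← add_assoc]; exact h1
      simp only [Set.mem_setOf_eq, Matrix.sub_mulVec, Matrix.one_mulVec]
      rw [eq_sub_of_add_eq key]; abel
    exact h0 (measure_mono_null hsub (aux_null _ hLne _))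
  have hdet : Nz.det * Mz.det = 1 := by
    have h2 : N.det * M.det = 1 := by rw [← Matrix.det_mul, hNM, Matrix.det_one]
    rw [hM, hN, det_map_cast, det_map_cast] at h2
    exact_mod_cast h2
  have hMdet : |M.det| = 1 := by
    have hu : IsUnit Mz.det := IsUnit.of_mul_eq_one _ (by linarith [hdet] : Mz.det * Nz.det = 1)
    rcases Int.isUnit_iff.1 hu with h | h <;> rw [hM, det_map_cast, h] <;> simp
  rw [LinearMap.det_toLin', hMdet]
  simp

lemma IsIntAffine.exists_matrix {n : ℕ} {g : (Fin n → ℝ) → (Fin n → ℝ)} (hg : IsIntAffine g) :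
    ∃ (Mz : Matrix (Fin n) (Fin n) ℤ) (b : Fin n → ℝ),
      g = fun x => (Mz.map (Int.cast : ℤ → ℝ)).mulVec x + b := by
  obtain ⟨M, b, hMb⟩ := hg
  refine ⟨Matrix.of M, fun i => (b i : ℝ), ?_⟩
  funext x i
  simp [hMb x i, Matrix.mulVec, dotProduct, Matrix.map_apply]

lemma affine_continuous {n : ℕ} (A : Matrix (Fin n) (Fin n) ℝ) (b : Fin n → ℝ) :
    Continuous fun x => A.mulVec x + b := by
  have h : Continuous fun x : Fin n → ℝ => Matrix.toLin' A x :=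
    (Matrix.toLin' A).continuous_of_finiteDimensional
  simp only [Matrix.toLin'_apply] at h
  exact h.add continuous_const

/-- If `σ` is a Z-retraction of the cube whose range is Z-homeomorphic to the
whole cube, then `σ` is the identity on the cube; consequently the identity is the unique
retraction of `McN([0,1]^n)` onto itself, i.e. the index of the free MV-algebra is 1. -/
theorem stmt6 {n : ℕ} (hn : 1 ≤ n) (σ : (Fin n → ℝ) → (Fin n → ℝ))
    (hσ : IsZRetraction σ)
    (hh : ∃ f, IsZHomeoOnto (zRange σ) (cubeSet n) f) :
    Set.EqOn σ id (cubeSet n) ∧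
    (∀ ε : ↥(McN n) → ↥(McN n), IsMcNRetraction ε (McN n) → ε = id) := by
  classical
  -- Part 2 is independent of Part 1.
  have part2 : ∀ ε : ↥(McN n) → ↥(McN n), IsMcNRetraction ε (McN n) → ε = id := by
    intro ε hε
    obtain ⟨-, -, hidem, hrange⟩ := hε
    funext u
    have hu : u.1 ∈ Subtype.val '' Set.range ε := by rw [hrange]; exact u.2
    obtain ⟨v, ⟨w, hw⟩, hval⟩ := hu
    have hvu : v = u := Subtype.ext hval
    have huw : ε w = u := by rw [hw, hvu]
    calc ε u = ε (ε w) := by rw [huw]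
    _ = ε w := hidem w
    _ = u := huw
  -- Part 1.
  obtain ⟨f, ⟨fcont, k, g, hgaff, hgp⟩, hfimg, hfinj, ginv, ⟨gcont, l, hpc, hhaff, hhp⟩, hgf, hfg⟩ := hh
  obtain ⟨⟨σcont, -⟩, σmaps, σidem⟩ := hσ
  set P := zRange σ with hPdef
  have hcube_comp : IsCompact (cubeSet n) := isCompact_Icc
  have hPcomp : IsCompact P := hcube_comp.image_of_continuousOn σcont
  have hPclosed : IsClosed P := hPcomp.isClosed
  have hPmeas : MeasurableSet P := hPcomp.measurableSet
  have hPsub : P ⊆ cubeSet n := σmaps.image_subset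
  -- affine pieces as matrices
  choose Mg bg hgEq using fun i => (hgaff i).exists_matrix
  choose Mh bh hhEq using fun j => (hhaff j).exists_matrix
  -- the closed pieces
  set C : Fin k → Fin l → Set (Fin n → ℝ) :=
    fun i j => {x | x ∈ P ∧ f x = g i x ∧ ginv (f x) = hpc j (f x)} with hCdef
  have hmapsto : Set.MapsTo f P (cubeSet n) := by
    intro x hx; rw [← hfimg]; exact Set.mem_image_of_mem f hx
  have hCclosed : ∀ i j, IsClosed (C i j) := by
    intro i j
    have hgc : Continuous (g i) := by rw [hgEq i]; exact affine_continuous _ _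
    have hhc : Continuous (hpc j) := by rw [hhEq j]; exact affine_continuous _ _
    have h1 : ContinuousOn (fun x => f x - g i x) P := fcont.sub hgc.continuousOn
    have h2 : ContinuousOn (fun x => ginv (f x) - hpc j (f x)) P :=
      (gcont.comp fcont hmapsto).sub (hhc.comp_continuousOn fcont)
    have hrw : C i j = (P ∩ (fun x => f x - g i x) ⁻¹' {0}) ∩
        (P ∩ (fun x => ginv (f x) - hpc j (f x)) ⁻¹' {0}) := by
      ext x
      simp only [hCdef, Set.mem_setOf_eq, Set.mem_inter_iff, Set.mem_preimage,
        Set.mem_singleton_iff, sub_eq_zero]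
      tauto
    rw [hrw]
    exact (h1.preimage_isClosed_of_isClosed hPclosed isClosed_singleton).inter
      (h2.preimage_isClosed_of_isClosed hPclosed isClosed_singleton)
  have hCcover : P ⊆ ⋃ i, ⋃ j, C i j := by
    intro x hx
    obtain ⟨i, hi⟩ := hgp x hx
    obtain ⟨j, hj⟩ := hhp (f x) (hmapsto hx)
    exact Set.mem_iUnion.2 ⟨i, Set.mem_iUnion.2 ⟨j, ⟨hx, hi, hj⟩⟩⟩
  have hCkey : ∀ i j, ∀ x ∈ C i j, hpc j (g i x) = x := by
    rintro i j x ⟨hx, h1, h2⟩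
    rw [← h1, ← h2]
    exact hgf x hx
  -- disjointification
  set C' : ℕ → Set (Fin n → ℝ) := fun m =>
    if hm : m < k * l then C (finProdFinEquiv.symm ⟨m, hm⟩).1 (finProdFinEquiv.symm ⟨m, hm⟩).2
    else ∅ with hC'def
  have hC'meas : ∀ m, MeasurableSet (C' m) := by
    intro m
    by_cases hm : m < k * l
    · simp only [hC'def, dif_pos hm]
      exact (hCclosed _ _).measurableSet
    · simp [hC'def, dif_neg hm]
  set D := disjointed C' with hDdef
  have hDmeas : ∀ m, MeasurableSet (D m) := MeasurableSet.disjointed hC'meas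
  have hDsub : ∀ m, D m ⊆ C' m := disjointed_subset C'
  have hDcover : P ⊆ ⋃ m, D m := by
    rw [hDdef, iUnion_disjointed]
    intro x hx
    obtain ⟨s, ⟨i, rfl⟩, hmem⟩ := hCcover hx
    obtain ⟨t, ⟨j, rfl⟩, hmem2⟩ := hmem
    refine Set.mem_iUnion.2 ⟨(finProdFinEquiv (i, j) : Fin (k * l)), ?_⟩
    have hlt : ((finProdFinEquiv (i, j) : Fin (k * l)) : ℕ) < k * l :=
      (finProdFinEquiv (i, j)).isLt
    simp only [hC'def, dif_pos hlt]
    rw [show (⟨((finProdFinEquiv (i, j) : Fin (k * l)) : ℕ), hlt⟩ : Fin (k * l))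
        = finProdFinEquiv (i, j) from Fin.ext rfl, Equiv.symm_apply_apply]
    exact hmem2
  -- per-piece measure bound
  have hpiece : ∀ m, volume (f '' (P ∩ D m)) ≤ volume (P ∩ D m) := by
    intro m
    by_cases hm : m < k * l
    · set i := (finProdFinEquiv.symm ⟨m, hm⟩).1 with hidef
      set j := (finProdFinEquiv.symm ⟨m, hm⟩).2 with hjdef
      have hSC : P ∩ D m ⊆ C i j := by
        intro x hx
        have := hDsub m hx.2
        simpa only [hC'def, dif_pos hm] using this
      have himg : f '' (P ∩ D m) ⊆
          (fun x => ((Mg i).map (Int.cast : ℤ → ℝ)).mulVec x + bg i) '' (P ∩ D m) := by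
        rintro y ⟨x, hx, rfl⟩
        refine ⟨x, hx, ?_⟩
        have h1 : f x = g i x := (hSC hx).2.1
        rw [h1, hgEq i]
      refine le_trans (measure_mono himg) ?_
      refine piece_bound (Mg i) (Mh j) (bg i) (bh j) _ ?_
      intro x hx
      have := hCkey i j x (hSC hx)
      rw [hhEq j, hgEq i] at this
      exact this
    · have hempty : P ∩ D m = ∅ := by
        have : D m ⊆ ∅ := by
          refine le_trans (hDsub m) ?_
          simp [hC'def, dif_neg hm]
        simp [Set.eq_empty_iff_forall_notMem]
        intro x hx hx2
        exact this hx2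
      simp [hempty]
  -- measure comparison
  have hμQ : volume (cubeSet n) = 1 := by
    show volume (Set.Icc (0 : Fin n → ℝ) 1) = 1
    rw [Real.volume_Icc_pi]
    simp
  have key : volume (cubeSet n) ≤ volume P := by
    calc volume (cubeSet n) = volume (f '' P) := by rw [hfimg]
    _ ≤ volume (⋃ m, f '' (P ∩ D m)) := by
        refine measure_mono ?_
        rw [← Set.image_iUnion]
        refine Set.image_mono ?_
        intro x hx
        rw [← Set.inter_iUnion]
        exact ⟨hx, hDcover hx⟩
    _ ≤ ∑' m, volume (f '' (P ∩ D m)) := measure_iUnion_le _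
    _ ≤ ∑' m, volume (P ∩ D m) := ENNReal.tsum_le_tsum hpiece
    _ = volume (⋃ m, P ∩ D m) := by
        refine (measure_iUnion ?_ (fun m => hPmeas.inter (hDmeas m))).symm
        intro a b hab
        exact Set.disjoint_of_subset Set.inter_subset_right Set.inter_subset_right
          (disjoint_disjointed C' hab)
    _ ≤ volume P := measure_mono (Set.iUnion_subset fun m => Set.inter_subset_left)
  have hμP : volume P = 1 :=
    le_antisymm (hμQ ▸ measure_mono hPsub) (hμQ ▸ key)
  have hdiff : volume (cubeSet n \ P) = 0 := by
    rw [measure_diff hPsub hPmeas.nullMeasurableSet (by rw [hμP]; exact ENNReal.one_ne_top),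
      hμP, hμQ, tsub_self]
  -- the open box is inside P
  have hboxsub : (Set.pi Set.univ fun _ : Fin n => Set.Ioo (0:ℝ) 1) ⊆ cubeSet n := by
    intro x hx
    refine Set.mem_Icc.2 ⟨fun i => (hx i (Set.mem_univ i)).1.le,
      fun i => (hx i (Set.mem_univ i)).2.le⟩
  have hbox : (Set.pi Set.univ fun _ : Fin n => Set.Ioo (0:ℝ) 1) ⊆ P := by
    have hUopen : IsOpen ((Set.pi Set.univ fun _ : Fin n => Set.Ioo (0:ℝ) 1) \ P) :=
      (isOpen_set_pi Set.finite_univ fun _ _ => isOpen_Ioo).sdiff hPclosed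
    have hUnull : volume ((Set.pi Set.univ fun _ : Fin n => Set.Ioo (0:ℝ) 1) \ P) = 0 :=
      measure_mono_null (Set.diff_subset_diff_left hboxsub) hdiff
    have hUempty := hUopen.eq_empty_of_measure_zero hUnull
    rwa [Set.diff_eq_empty] at hUempty
  have hcubeP : cubeSet n ⊆ P := by
    have h1 : closure (Set.pi Set.univ fun _ : Fin n => Set.Ioo (0:ℝ) 1) = cubeSet n := by
      rw [closure_pi_set]
      simp only [closure_Ioo (zero_ne_one)]
      show (Set.pi Set.univ fun _ : Fin n => Set.Icc (0:ℝ) 1) = cubeSet n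
      rw [show (fun _ : Fin n => Set.Icc (0:ℝ) 1)
          = fun i => Set.Icc ((0 : Fin n → ℝ) i) ((1 : Fin n → ℝ) i) from rfl, Set.pi_univ_Icc]
      rfl
    rw [← h1]
    exact closure_minimal hbox hPclosed
  have hPeq : P = cubeSet n := Set.Subset.antisymm hPsub hcubeP
  constructor
  · intro x hx
    have hxP : x ∈ P := by rw [hPeq]; exact hx
    obtain ⟨y, hy, rfl⟩ := hxP
    simpa using σidem y hy
  · exact part2
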